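/- Let f : ℕ → ℕ, let U : X → 2^X be a perturbation function with x ∈ U(x) for all x and with each U(x) finite, and let M = sup_{x ∈ X} |U(x)| < ∞. Suppose that for every domain X' and every binary concept class H ⊆ {0,1}^{X'} with finite VC dimension d, there exists a stable exact realizable sample compression scheme for H of size at most f(d). Then every binary concept class C ⊆ {0,1}^X with finite VC dimension d_VC admits an adversarially robust sample compression scheme with respect to U of size at most f(d_VC). -/
import Mathlib


universe u

/-- A finite sample `S` is realizable by the concept class `C`. -/
def Realizable {X Y : Type*} (C : Set (X → Y)) (S : List (X × Y)) : Prop :=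
  ∃ c ∈ C, ∀ p ∈ S, c p.1 = p.2

/-- `(κ, ρ)` is an exact realizable sample compression scheme for `C` of size at most `k`. -/
def IsExactRealizableScheme {X Y : Type*} (C : Set (X → Y)) (k : ℕ)
    (κ : List (X × Y) → List (X × Y) × List Bool)
    (ρ : List (X × Y) × List Bool → X → Y) : Prop :=
  (∀ S : List (X × Y), (κ S).1 ⊆ S) ∧
  (∀ S : List (X × Y), Realizable C S → (κ S).1.length + (κ S).2.length ≤ k) ∧
  (∀ S : List (X × Y), Realizable C S → ∀ p ∈ S, ρ (κ S) p.1 = p.2)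

/-- A compression function is stable: for every realizable `S` and every `T` with
`κ S ⊆ T ⊆ S`, `κ T = κ S`. -/
def IsStable {X Y : Type*} (C : Set (X → Y))
    (κ : List (X × Y) → List (X × Y) × List Bool) : Prop :=
  ∀ S T : List (X × Y), Realizable C S → (κ S).1 ⊆ T → T ⊆ S → κ T = κ S

/-- `n` points of `X` are shattered by the binary concept class `H ⊆ {0,1}^X`. -/
def ShattersN {X : Type*} (H : Set (X → Bool)) (n : ℕ) : Prop :=
  ∃ x : Fin n → X, ∀ b : Fin n → Bool, ∃ h ∈ H, ∀ i, h (x i) = b i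

/-- `H` has (finite) VC dimension exactly `d`. -/
def IsVCDim {X : Type*} (H : Set (X → Bool)) (d : ℕ) : Prop :=
  ShattersN H d ∧ ¬ ShattersN H (d + 1)

/-- `S` is robustly realizable by `C` with respect to the perturbation function `U`. -/
def RobustRealizable {X : Type*} (C : Set (X → Bool)) (U : X → Set X)
    (S : List (X × Bool)) : Prop :=
  ∃ c ∈ C, ∀ p ∈ S, ∀ z ∈ U p.1, c z = p.2

/-- `(κ, ρ)` is an adversarially robust sample compression scheme for `C` with respect
to the perturbation function `U`, of size at most `k`. -/
def IsRobustScheme {X : Type*} (C : Set (X → Bool)) (U : X → Set X) (k : ℕ)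
    (κ : List (X × Bool) → List (X × Bool) × List Bool)
    (ρ : List (X × Bool) × List Bool → X → Bool) : Prop :=
  (∀ S : List (X × Bool), (κ S).1 ⊆ S) ∧
  (∀ S : List (X × Bool), RobustRealizable C U S →
    (κ S).1.length + (κ S).2.length ≤ k) ∧
  (∀ S : List (X × Bool), RobustRealizable C U S →
    ∀ p ∈ S, ∀ z ∈ U p.1, ρ (κ S) z = p.2)

/-- Robust compression assuming stable binary compression: let `U` be a perturbation
function with `x ∈ U x`, each `U x` finite of cardinality at most `M`. If every binary
class of finite VC dimension `d` has a stable exact realizable compression scheme of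
size at most `f d`, then every binary class `C` of finite VC dimension `d_VC` admits an
adversarially robust compression scheme with respect to `U` of size at most `f d_VC`. -/
theorem robust_compression_of_stable_binary {X : Type u} (f : ℕ → ℕ)
    (U : X → Set X) (hU : ∀ x, x ∈ U x) (hfin : ∀ x, (U x).Finite)
    (M : ℕ) (hM : ∀ x, Nat.card (U x) ≤ M)
    (hbin : ∀ (X' : Type u) (H : Set (X' → Bool)) (d : ℕ), IsVCDim H d →
      ∃ κ ρ, IsExactRealizableScheme H (f d) κ ρ ∧ IsStable H κ)
    (C : Set (X → Bool)) (dVC : ℕ) (hC : IsVCDim C dVC) :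
    ∃ κ ρ, IsRobustScheme C U (f dVC) κ ρ := by
  classical
  obtain ⟨κ₀, ρ₀, ⟨hsub, hsize, hcorr⟩, hstab⟩ := hbin X C dVC hC
  -- inflation of a sample
  set I : List (X × Bool) → List (X × Bool) :=
    fun S => S.flatMap fun p => ((hfin p.1).toFinset.toList).map fun z => (z, p.2) with hIdef
  have memI : ∀ (S : List (X × Bool)) (q : X × Bool),
      q ∈ I S ↔ ∃ p ∈ S, q.1 ∈ U p.1 ∧ q.2 = p.2 := by
    intro S q
    constructor
    · intro hq
      simp only [hIdef, List.mem_flatMap, List.mem_map] at hq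
      obtain ⟨p, hp, z, hz, hzq⟩ := hq
      rw [Finset.mem_toList, Set.Finite.mem_toFinset] at hz
      refine ⟨p, hp, ?_, ?_⟩ <;> simp [← hzq, hz]
    · rintro ⟨p, hp, hz, hy⟩
      simp only [hIdef, List.mem_flatMap, List.mem_map]
      refine ⟨p, hp, q.1, ?_, ?_⟩
      · rw [Finset.mem_toList, Set.Finite.mem_toFinset]; exact hz
      · exact Prod.ext rfl hy.symm
  have Imono : ∀ S T : List (X × Bool), S ⊆ T → I S ⊆ I T := by
    intro S T hST q hq
    obtain ⟨p, hp, h⟩ := (memI S q).1 hq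
    exact (memI T q).2 ⟨p, hST hp, h⟩
  have real_I : ∀ S, RobustRealizable C U S → Realizable C (I S) := by
    rintro S ⟨c, hc, hrob⟩
    refine ⟨c, hc, fun q hq => ?_⟩
    obtain ⟨p, hp, hz, hy⟩ := (memI S q).1 hq
    rw [hy]; exact hrob p hp q.1 hz
  -- choose an original point covering an inflated point
  set g : List (X × Bool) → X × Bool → X × Bool :=
    fun S q => if h : ∃ p ∈ S, q.1 ∈ U p.1 ∧ q.2 = p.2 then h.choose else q with hgdef
  have hg : ∀ (S : List (X × Bool)) (q : X × Bool), q ∈ I S →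
      g S q ∈ S ∧ q.1 ∈ U (g S q).1 ∧ q.2 = (g S q).2 := by
    intro S q hq
    have h := (memI S q).1 hq
    simp only [hgdef, dif_pos h]
    exact ⟨h.choose_spec.1, h.choose_spec.2⟩
  refine ⟨fun S => (((κ₀ (I S)).1).map (g S), (κ₀ (I S)).2),
    fun T => ρ₀ (κ₀ (I T.1)), ?_, ?_, ?_⟩
  · intro S q' hq'
    obtain ⟨q, hq, rfl⟩ := List.mem_map.1 hq'
    exact (hg S q (hsub (I S) hq)).1
  · intro S hS
    simpa [List.length_map] using hsize (I S) (real_I S hS)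
  · intro S hS p hp z hz
    have hreal := real_I S hS
    -- the re-mapped compression set
    set S'' : List (X × Bool) := ((κ₀ (I S)).1).map (g S) with hS''
    have hsub'' : S'' ⊆ S := by
      intro q' hq'
      obtain ⟨q, hq, rfl⟩ := List.mem_map.1 hq'
      exact (hg S q (hsub (I S) hq)).1
    have hPsub : (κ₀ (I S)).1 ⊆ I S'' := by
      intro q hq
      obtain ⟨h1, h2, h3⟩ := hg S q (hsub (I S) hq)
      exact (memI S'' q).2 ⟨g S q, List.mem_map.2 ⟨q, hq, rfl⟩, h2, h3⟩
    have hkey : κ₀ (I S'') = κ₀ (I S) :=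
      hstab (I S) (I S'') hreal hPsub (Imono S'' S hsub'')
    show ρ₀ (κ₀ (I S'')) z = p.2
    rw [hkey]
    have hzmem : (z, p.2) ∈ I S := (memI S (z, p.2)).2 ⟨p, hp, hz, rfl⟩
    exact hcorr (I S) hreal (z, p.2) hzmem
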